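/- arXiv:2112.03107 — 2 statements merged into one kernel-verified Lean document; each statement's English description precedes it below -/
import Mathlib

section
/- For any graph G, γ_m^∞(G) ≤ β(G), where β(G) is the independence number. -/
open scoped Classical

namespace ED

variable {V : Type}

/-- `D` is a dominating set of `G`. -/
def IsDomSet (G : SimpleGraph V) (D : Set V) : Prop :=
  ∀ v, v ∉ D → ∃ u ∈ D, G.Adj u v

/-- The domination number. -/
noncomputable def domNum (G : SimpleGraph V) : ℕ :=
  sInf {n | ∃ D : Set V, IsDomSet G D ∧ D.ncard = n}

/-- The connected domination number. -/
noncomputable def connDomNum (G : SimpleGraph V) : ℕ :=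
  sInf {n | ∃ D : Set V, IsDomSet G D ∧ (G.induce D).Connected ∧ D.ncard = n}

/-- The weight of a part of a neo-colonization. -/
noncomputable def partWeight (G : SimpleGraph V) (S : Set V) : ℕ :=
  if G.IsClique S then 1 else 1 + connDomNum (G.induce S)

/-- `P` is a neo-colonization of `G`: a partition of the vertex set into parts
inducing connected subgraphs. -/
def IsNeoColonization (G : SimpleGraph V) (P : Finset (Set V)) : Prop :=
  (∀ S ∈ P, (G.induce S).Connected) ∧ (∀ v : V, ∃! S, S ∈ P ∧ v ∈ S)

/-- The total weight of a neo-colonization. -/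
noncomputable def neoWeight (G : SimpleGraph V) (P : Finset (Set V)) : ℕ :=
  ∑ S ∈ P, partWeight G S

/-- The clique-connected cover number: minimum weight of a neo-colonization. -/
noncomputable def thetaC (G : SimpleGraph V) : ℕ :=
  sInf {w | ∃ P : Finset (Set V), IsNeoColonization G P ∧ neoWeight G P = w}

/-- `k` guards can defend `G` in the all-guards-move eternal domination game:
there is a nonempty family of dominating configurations of size `k`, closed under
responding to attacks, where every guard may move to an adjacent vertex and the
attacked vertex becomes occupied. -/
def CanDefendAllMove (G : SimpleGraph V) (k : ℕ) : Prop :=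
  ∃ F : Set (Set V), F.Nonempty ∧ (∀ D ∈ F, IsDomSet G D ∧ D.ncard = k) ∧
    ∀ D ∈ F, ∀ r ∉ D, ∃ D' ∈ F, r ∈ D' ∧
      ∃ f : V → V, Set.BijOn f D D' ∧ ∀ v ∈ D, f v = v ∨ G.Adj v (f v)

/-- The m-eternal domination number. -/
noncomputable def mEternalDomNum (G : SimpleGraph V) : ℕ :=
  sInf {k | CanDefendAllMove G k}

/-- `k` guards can defend `G` in the one-guard-moves eternal domination game. -/
def CanDefendOneMove (G : SimpleGraph V) (k : ℕ) : Prop :=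
  ∃ F : Set (Set V), F.Nonempty ∧ (∀ D ∈ F, IsDomSet G D ∧ D.ncard = k) ∧
    ∀ D ∈ F, ∀ r ∉ D, ∃ v ∈ D, G.Adj v r ∧ insert r (D \ {v}) ∈ F

/-- The eternal domination number. -/
noncomputable def eternalDomNum (G : SimpleGraph V) : ℕ :=
  sInf {k | CanDefendOneMove G k}

/-- The independence number. -/
noncomputable def indepNum (G : SimpleGraph V) : ℕ :=
  sSup {n | ∃ S : Set V, S.Pairwise (fun u v => ¬ G.Adj u v) ∧ S.ncard = n}

/-- A leaf: a vertex of degree one. -/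
def IsLeaf (G : SimpleGraph V) (v : V) : Prop := (G.neighborSet v).ncard = 1

/-- A stem: a vertex of degree at least two adjacent to a leaf. -/
def IsStem (G : SimpleGraph V) (s : V) : Prop :=
  2 ≤ (G.neighborSet s).ncard ∧ ∃ v, G.Adj s v ∧ IsLeaf G v

/-- A loner: an internal vertex adjacent to no leaf. -/
def IsLoner (G : SimpleGraph V) (v : V) : Prop :=
  ¬ IsLeaf G v ∧ ∀ u, G.Adj v u → ¬ IsLeaf G u

/-- A weak stem: a stem adjacent to exactly one leaf. -/
def IsWeakStem (G : SimpleGraph V) (s : V) : Prop :=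
  IsStem G s ∧ {v | G.Adj s v ∧ IsLeaf G v}.ncard = 1

/-- An exposed stem: a stem with at most one internal (non-leaf) neighbor. -/
def IsExposedStem (G : SimpleGraph V) (s : V) : Prop :=
  IsStem G s ∧ {v | G.Adj s v ∧ ¬ IsLeaf G v}.ncard ≤ 1

/-- `G` is a star: some center is adjacent to all other vertices and
every edge is incident to the center. -/
def IsStarGraph (G : SimpleGraph V) : Prop :=
  ∃ c, (∀ v, v ≠ c → G.Adj c v) ∧ ∀ u v, G.Adj u v → u = c ∨ v = c

end ED


set_option linter.unusedSectionVars false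
set_option linter.unusedVariables false
set_option maxHeartbeats 1000000

namespace EDAux

variable {V : Type} [Fintype V] (G : SimpleGraph V)
def Ind (S : Set V) : Prop := S.Pairwise fun u v => ¬ G.Adj u v
def cl (T : Set V) : Set V := T ∪ {v | ∃ t ∈ T, G.Adj t v}
def Pp (D : Set V) : Prop := ∀ T, Ind G T → T.ncard ≤ (cl G T ∩ D).ncard
variable {G}
lemma mem_cl {T : Set V} {v : V} : v ∈ cl G T ↔ v ∈ T ∨ ∃ t ∈ T, G.Adj t v := Iff.rfl
lemma subset_cl (T : Set V) : T ⊆ cl G T := fun _ h => Or.inl h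
lemma cl_mono {S T : Set V} (h : S ⊆ T) : cl G S ⊆ cl G T := by
  rintro v (hv | ⟨t, ht, hadj⟩)
  · exact Or.inl (h hv)
  · exact Or.inr ⟨t, h ht, hadj⟩
lemma cl_union (S T : Set V) : cl G (S ∪ T) = cl G S ∪ cl G T := by
  ext v
  constructor
  · rintro (hv | ⟨t, (ht | ht), hadj⟩)
    · rcases hv with hv | hv
      · exact Or.inl (Or.inl hv)
      · exact Or.inr (Or.inl hv)
    · exact Or.inl (Or.inr ⟨t, ht, hadj⟩)
    · exact Or.inr (Or.inr ⟨t, ht, hadj⟩)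
  · rintro (h | h) <;> exact (cl_mono (by simp)) h
lemma ind_mono {S T : Set V} (h : S ⊆ T) (hT : Ind G T) : Ind G S := Set.Pairwise.mono h hT
lemma ind_union {S T : Set V} (hS : Ind G S) (hT : Ind G T)
    (hST : ∀ s ∈ S, ∀ t ∈ T, ¬ G.Adj s t) : Ind G (S ∪ T) := by
  have hsymm : Symmetric fun u v => ¬ G.Adj u v := fun u v h h' => h (G.adj_symm h')
  haveI : Std.Symm (fun u v : V => ¬ G.Adj u v) := ⟨fun a b h => hsymm h⟩
  rw [Ind, Set.pairwise_union_of_symm]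
  exact ⟨hS, hT, fun s hs t ht _ => hST s hs t ht⟩

/-- The exchanged set `(M \ N[T]) ∪ T` is independent and we can compute its size. -/
lemma exchange_set {M T : Set V} (hM : Ind G M) (hT : Ind G T) :
    Ind G ((M \ cl G T) ∪ T) ∧
      ((M \ cl G T) ∪ T).ncard = M.ncard - (cl G T ∩ M).ncard + T.ncard := by
  constructor
  · refine ind_union (ind_mono Set.diff_subset hM) hT ?_
    intro s hs t ht hadj
    exact hs.2 (Or.inr ⟨t, ht, G.adj_symm hadj⟩)
  · have hdisj : Disjoint (M \ cl G T) T := by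
      refine Set.disjoint_left.mpr ?_
      intro a ha hat
      exact ha.2 (subset_cl T hat)
    rw [Set.ncard_union_eq hdisj (Set.toFinite _) (Set.toFinite _)]
    have hMd : M \ cl G T = M \ (cl G T ∩ M) := by rw [Set.diff_inter_self_eq_diff]
    rw [hMd, Set.ncard_diff Set.inter_subset_right (Set.toFinite _)]

lemma exchange {M T : Set V} (hM : Ind G M) (hub : ∀ S, Ind G S → S.ncard ≤ M.ncard)
    (hT : Ind G T) : T.ncard ≤ (cl G T ∩ M).ncard := by
  obtain ⟨hWind, hWcard⟩ := exchange_set hM hT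
  have h1 := hub _ hWind
  have hle : (cl G T ∩ M).ncard ≤ M.ncard :=
    Set.ncard_le_ncard Set.inter_subset_right (Set.toFinite _)
  omega

section Blocking

variable (G) in
/-- A blocking set relative to `M`, `D`, `r`. -/
def Blk (M D : Set V) (r : V) (S : Set V) : Prop :=
  S ⊆ M ∧ (cl G S ∩ D).ncard = S.ncard ∧ (G.neighborSet r ∩ D) ⊆ cl G S

/-- Blocking sets are closed under intersection (submodularity). -/
lemma blk_inter {M D : Set V} {r : V} (hM : Ind G M) (hD : Pp G D)
    {S₁ S₂ : Set V} (h1 : Blk G M D r S₁) (h2 : Blk G M D r S₂) :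
    Blk G M D r (S₁ ∩ S₂) := by
  obtain ⟨h1M, h1t, h1c⟩ := h1
  obtain ⟨h2M, h2t, h2c⟩ := h2
  have hiM : S₁ ∩ S₂ ⊆ M := fun x hx => h1M hx.1
  have huM : S₁ ∪ S₂ ⊆ M := Set.union_subset h1M h2M
  have hIu : Ind G (S₁ ∪ S₂) := ind_mono huM hM
  have hIi : Ind G (S₁ ∩ S₂) := ind_mono hiM hM
  -- inclusion-exclusion on the guard sides
  have key : ((cl G S₁ ∩ D) ∪ (cl G S₂ ∩ D)).ncard + ((cl G S₁ ∩ D) ∩ (cl G S₂ ∩ D)).ncard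
      = (cl G S₁ ∩ D).ncard + (cl G S₂ ∩ D).ncard :=
    Set.ncard_union_add_ncard_inter _ _ (Set.toFinite _) (Set.toFinite _)
  have keyS : (S₁ ∪ S₂).ncard + (S₁ ∩ S₂).ncard = S₁.ncard + S₂.ncard :=
    Set.ncard_union_add_ncard_inter _ _ (Set.toFinite _) (Set.toFinite _)
  have e1 : (cl G S₁ ∩ D) ∪ (cl G S₂ ∩ D) = cl G (S₁ ∪ S₂) ∩ D := by
    rw [cl_union, Set.union_inter_distrib_right]
  have e2 : (cl G S₁ ∩ D) ∩ (cl G S₂ ∩ D) = (cl G S₁ ∩ cl G S₂) ∩ D := by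
    ext v; constructor
    · rintro ⟨⟨a, b⟩, ⟨c, d⟩⟩; exact ⟨⟨a, c⟩, b⟩
    · rintro ⟨⟨a, c⟩, b⟩; exact ⟨⟨a, b⟩, ⟨c, b⟩⟩
  have hclsub : cl G (S₁ ∩ S₂) ∩ D ⊆ (cl G S₁ ∩ cl G S₂) ∩ D := by
    intro v hv
    exact ⟨⟨cl_mono Set.inter_subset_left hv.1, cl_mono Set.inter_subset_right hv.1⟩, hv.2⟩
  have hb1 := hD _ hIu
  have hb2 := hD _ hIi
  have hle1 : (cl G (S₁ ∩ S₂) ∩ D).ncard ≤ ((cl G S₁ ∩ cl G S₂) ∩ D).ncard :=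
    Set.ncard_le_ncard hclsub (Set.toFinite _)
  rw [e1, e2] at key
  -- derive tightness and set equality
  have htight : (cl G (S₁ ∩ S₂) ∩ D).ncard = (S₁ ∩ S₂).ncard := by omega
  have hceq : ((cl G S₁ ∩ cl G S₂) ∩ D).ncard = (cl G (S₁ ∩ S₂) ∩ D).ncard := by omega
  have hseteq : cl G (S₁ ∩ S₂) ∩ D = (cl G S₁ ∩ cl G S₂) ∩ D :=
    Set.eq_of_subset_of_ncard_le hclsub (le_of_eq hceq) (Set.toFinite _)
  refine ⟨hiM, htight, ?_⟩
  intro v hv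
  have : v ∈ (cl G S₁ ∩ cl G S₂) ∩ D := ⟨⟨h1c hv, h2c hv⟩, hv.2⟩
  rw [← hseteq] at this
  exact this.1

/-- Every blocking set contains a neighbor of `r`. -/
lemma blk_meets {M D : Set V} {r : V} (hM : Ind G M) (hD : Pp G D)
    (hrM : r ∉ M) (hrD : r ∉ D)
    {S : Set V} (hS : Blk G M D r S) : ∃ u ∈ S, G.Adj r u := by
  by_contra hno
  push_neg at hno
  obtain ⟨hSM, hSt, hSc⟩ := hS
  have hrS : r ∉ S := fun h => hrM (hSM h)
  have hW : Ind G (S ∪ {r}) := by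
    refine ind_union (ind_mono hSM hM) (Set.pairwise_singleton r _) ?_
    intro s hs t ht
    rw [Set.mem_singleton_iff] at ht; subst ht
    exact fun h => hno s hs (G.adj_symm h)
  have hcard : (S ∪ {r}).ncard = S.ncard + 1 := by
    rw [Set.union_singleton, Set.ncard_insert_of_notMem hrS (Set.toFinite _)]
  have hsub : cl G (S ∪ {r}) ∩ D ⊆ cl G S ∩ D := by
    intro v hv
    obtain ⟨hv1, hv2⟩ := hv
    rw [cl_union] at hv1
    rcases hv1 with hv1 | hv1
    · exact ⟨hv1, hv2⟩
    · rcases hv1 with hv1 | ⟨t, ht, hadj⟩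
      · rw [Set.mem_singleton_iff] at hv1; subst hv1; exact absurd hv2 hrD
      · rw [Set.mem_singleton_iff] at ht; subst ht
        exact ⟨hSc ⟨hadj, hv2⟩, hv2⟩
  have h1 := hD _ hW
  have h2 : (cl G (S ∪ {r}) ∩ D).ncard ≤ (cl G S ∩ D).ncard :=
    Set.ncard_le_ncard hsub (Set.toFinite _)
  omega

end Blocking
/-- From a Hall condition, produce a one-step bijective guard movement from `D` onto `Q`. -/
lemma hall_bij {D Q : Set V} (hcard : Q.ncard = D.ncard)
    (hH : ∀ T, T ⊆ Q → T.ncard ≤ (cl G T ∩ D).ncard) :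
    ∃ f : V → V, Set.BijOn f D Q ∧ ∀ v ∈ D, f v = v ∨ G.Adj v (f v) := by
  set t : ↥Q → Finset V := fun x => (cl G {(x : V)} ∩ D).toFinset with ht
  have hall : ∀ s : Finset ↥Q, s.card ≤ (s.biUnion t).card := by
    intro s
    set T : Set V := Subtype.val '' (↑s : Set ↥Q) with hT
    have hTQ : T ⊆ Q := by
      rintro v ⟨x, _, rfl⟩; exact x.2
    have hTcard : T.ncard = s.card := by
      rw [hT, Set.ncard_image_of_injective _ Subtype.val_injective, Set.ncard_coe_finset]
    have hset : cl G T ∩ D = ↑(s.biUnion t) := by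
      ext v
      simp only [Finset.coe_biUnion, Set.mem_iUnion, Finset.mem_coe, ht, Set.mem_toFinset,
        Set.mem_inter_iff, mem_cl, Set.mem_singleton_iff]
      constructor
      · rintro ⟨hv | ⟨u, hu, hadj⟩, hvD⟩
        · obtain ⟨x, hx, rfl⟩ := hv
          exact ⟨x, hx, Or.inl rfl, hvD⟩
        · obtain ⟨x, hx, rfl⟩ := hu
          exact ⟨x, hx, Or.inr ⟨x, rfl, hadj⟩, hvD⟩
      · rintro ⟨x, hx, (rfl | ⟨u, rfl, hadj⟩), hvD⟩
        · exact ⟨Or.inl ⟨x, hx, rfl⟩, hvD⟩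
        · exact ⟨Or.inr ⟨x, ⟨x, hx, rfl⟩, hadj⟩, hvD⟩
    have := hH T hTQ
    rwa [hTcard, hset, Set.ncard_coe_finset] at this
  obtain ⟨f₀, hf₀inj, hf₀mem⟩ := (Finset.all_card_le_biUnion_card_iff_exists_injective t).mp hall
  have hf₀mem' : ∀ x : ↥Q, f₀ x ∈ cl G {(x : V)} ∧ f₀ x ∈ D := by
    intro x
    have := hf₀mem x
    rw [ht, Set.mem_toFinset] at this
    exact this
  set e : ↥Q → ↥D := fun x => ⟨f₀ x, (hf₀mem' x).2⟩ with he
  have heinj : Function.Injective e := by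
    intro x y hxy
    exact hf₀inj (congrArg Subtype.val hxy)
  have hcards : Fintype.card ↥Q = Fintype.card ↥D := by
    rw [← Nat.card_eq_fintype_card, ← Nat.card_eq_fintype_card,
      Nat.card_coe_set_eq, Nat.card_coe_set_eq, hcard]
  have hbij : Function.Bijective e := (Fintype.bijective_iff_injective_and_card e).mpr
    ⟨heinj, hcards⟩
  set eq : ↥Q ≃ ↥D := Equiv.ofBijective e hbij with heq
  refine ⟨fun v => if h : v ∈ D then ((eq.symm ⟨v, h⟩ : ↥Q) : V) else v, ⟨?_, ?_, ?_⟩, ?_⟩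
  · intro v hv
    simp only [dif_pos hv]
    exact (eq.symm ⟨v, hv⟩).2
  · intro v hv w hw hvw
    simp only [dif_pos hv, dif_pos hw] at hvw
    have : eq.symm ⟨v, hv⟩ = eq.symm ⟨w, hw⟩ := Subtype.ext hvw
    have := eq.symm.injective this
    exact congrArg Subtype.val this
  · intro q hq
    refine ⟨(eq ⟨q, hq⟩ : ↥D).1, (eq ⟨q, hq⟩ : ↥D).2, ?_⟩
    simp only [dif_pos (eq ⟨q, hq⟩ : ↥D).2]
    have : (⟨(eq ⟨q, hq⟩ : ↥D).1, (eq ⟨q, hq⟩ : ↥D).2⟩ : ↥D) = eq ⟨q, hq⟩ := Subtype.ext rfl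
    rw [this, Equiv.symm_apply_apply]
  · intro v hv
    simp only [dif_pos hv]
    set x : ↥Q := eq.symm ⟨v, hv⟩ with hx
    have hex : e x = ⟨v, hv⟩ := eq.apply_symm_apply ⟨v, hv⟩
    have hfx : f₀ x = v := congrArg Subtype.val hex
    have := (hf₀mem' x).1
    rw [hfx, mem_cl, Set.mem_singleton_iff] at this
    rcases this with h | ⟨u, hu, hadj⟩
    · exact Or.inl h.symm
    · rw [Set.mem_singleton_iff] at hu
      subst hu
      exact Or.inr (G.adj_symm hadj)
/-- `Pp` holds for any maximum independent set. -/
lemma pp_of_max {b : ℕ} (hub : ∀ S, Ind G S → S.ncard ≤ b)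
    {M : Set V} (hM : Ind G M) (hMb : M.ncard = b) : Pp G M :=
  fun T hT => exchange hM (fun S hS => (hub S hS).trans_eq hMb.symm) hT

/-- Main closure lemma: from a good configuration, any attack can be defended. -/
lemma closure {b : ℕ} (hub : ∀ S, Ind G S → S.ncard ≤ b)
    (hex : ∃ M, Ind G M ∧ M.ncard = b)
    {D : Set V} (hD : Pp G D) (hDb : D.ncard = b) {r : V} (hrD : r ∉ D) :
    ∃ D', D'.ncard = b ∧ Pp G D' ∧ r ∈ D' ∧
      ∃ f : V → V, Set.BijOn f D D' ∧ ∀ v ∈ D, f v = v ∨ G.Adj v (f v) := by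
  by_cases hnA : ∃ M, Ind G M ∧ M.ncard = b ∧ r ∈ M
  · -- easy case: `r` lies in a maximum independent set `M`; move all guards onto `M`.
    obtain ⟨M, hM, hMb, hrM⟩ := hnA
    have hcard : M.ncard = D.ncard := hMb.trans hDb.symm
    obtain ⟨f, hf1, hf2⟩ := hall_bij hcard
      (fun T hTM => hD T (ind_mono hTM hM))
    exact ⟨M, hMb, pp_of_max hub hM hMb, hrM, f, hf1, hf2⟩
  · -- hard case
    set 𝒜 : Set ℕ := {n | ∃ M, Ind G M ∧ M.ncard = b ∧ (M ∩ G.neighborSet r).ncard = n}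
      with h𝒜
    have hane : 𝒜.Nonempty := by
      obtain ⟨M, hM, hMb⟩ := hex
      exact ⟨_, M, hM, hMb, rfl⟩
    obtain ⟨M, hM, hMb, hMa⟩ := Nat.sInf_mem hane
    have hrM : r ∉ M := fun h => hnA ⟨M, hM, hMb, h⟩
    set A : Set V := M ∩ G.neighborSet r with hA
    -- `A` is nonempty: otherwise `M ∪ {r}` would be a larger independent set
    have hAne : A.Nonempty := by
      by_contra hno
      rw [Set.not_nonempty_iff_eq_empty] at hno
      have hWind : Ind G (M ∪ {r}) := by
        refine ind_union hM (Set.pairwise_singleton r _) ?_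
        intro s hs t ht
        rw [Set.mem_singleton_iff] at ht; subst ht
        intro hadj
        have : s ∈ A := ⟨hs, G.adj_symm hadj⟩
        rw [hno] at this
        exact this
      have hcard : (M ∪ {r}).ncard = b + 1 := by
        rw [Set.union_singleton, Set.ncard_insert_of_notMem hrM (Set.toFinite _), hMb]
      have := hub _ hWind
      omega
    -- choose `m`
    have hmex : ∃ m, m ∈ M ∧ G.Adj r m ∧ ∀ S, Blk G M D r S → m ∈ S := by
      by_cases hbl : ∃ S, Blk G M D r S
      · set ℬ : Set ℕ := {n | ∃ S, Blk G M D r S ∧ S.ncard = n} with hℬ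
        have hbne : ℬ.Nonempty := by
          obtain ⟨S, hS⟩ := hbl
          exact ⟨_, S, hS, rfl⟩
        obtain ⟨S₀, hS₀, hS₀n⟩ := Nat.sInf_mem hbne
        have hmin : ∀ S, Blk G M D r S → S₀.ncard ≤ S.ncard := by
          intro S h
          rw [hS₀n]
          exact Nat.sInf_le ⟨S, h, rfl⟩
        obtain ⟨m, hmS₀, hmadj⟩ := blk_meets hM hD hrM hrD hS₀
        refine ⟨m, hS₀.1 hmS₀, hmadj, ?_⟩
        intro S hS
        have hint := blk_inter hM hD hS₀ hS
        have heq : S₀ ∩ S = S₀ :=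
          Set.eq_of_subset_of_ncard_le Set.inter_subset_left (hmin _ hint) (Set.toFinite _)
        have : m ∈ S₀ ∩ S := by rw [heq]; exact hmS₀
        exact this.2
      · obtain ⟨m, hmM, hmr⟩ := hAne
        exact ⟨m, hmM, hmr, fun S hS => absurd ⟨S, hS⟩ hbl⟩
    obtain ⟨m, hmM, hmadj, hm_all⟩ := hmex
    set Q : Set V := insert r (M \ {m}) with hQ
    have hrMm : r ∉ M \ {m} := fun h => hrM h.1
    have hbpos : 1 ≤ b := by
      have : 0 < M.ncard := (Set.ncard_pos (Set.toFinite _)).mpr ⟨m, hmM⟩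
      omega
    have hQcard : Q.ncard = b := by
      rw [hQ, Set.ncard_insert_of_notMem hrMm (Set.toFinite _),
        Set.ncard_diff_singleton_of_mem hmM, hMb]
      omega
    -- Hall condition for moving the guards from `D` onto `Q`
    have hhall : ∀ T, T ⊆ Q → T.ncard ≤ (cl G T ∩ D).ncard := by
      intro T hTQ
      by_cases hrT : r ∈ T
      · set T' : Set V := T \ {r} with hT'
        have hT'sub : T' ⊆ M \ {m} := by
          intro x hx
          rcases hTQ hx.1 with h | h
          · exact absurd h hx.2
          · exact h
        have hT'ind : Ind G T' := ind_mono (hT'sub.trans Set.diff_subset) hM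
        have hTeq : T = insert r T' := by
          rw [hT', Set.insert_diff_singleton, Set.insert_eq_self.mpr hrT]
        have hrT' : r ∉ T' := fun h => h.2 rfl
        have hTcard : T.ncard = T'.ncard + 1 := by
          rw [hTeq, Set.ncard_insert_of_notMem hrT' (Set.toFinite _)]
        by_contra hcon
        push_neg at hcon
        have hbase := hD T' hT'ind
        have hmono : cl G T' ∩ D ⊆ cl G T ∩ D := by
          intro v hv
          exact ⟨cl_mono Set.diff_subset hv.1, hv.2⟩
        have hmono' : (cl G T' ∩ D).ncard ≤ (cl G T ∩ D).ncard :=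
          Set.ncard_le_ncard hmono (Set.toFinite _)
        by_cases hcov : G.neighborSet r ∩ D ⊆ cl G T'
        · have htight : (cl G T' ∩ D).ncard = T'.ncard := by omega
          have hblk : Blk G M D r T' := ⟨hT'sub.trans Set.diff_subset, htight, hcov⟩
          have := hm_all T' hblk
          exact (hT'sub this).2 rfl
        · obtain ⟨d, hd, hdncl⟩ := Set.not_subset.mp hcov
          have hdclT : d ∈ cl G T := Or.inr ⟨r, hrT, hd.1⟩
          have hdni : d ∉ cl G T' ∩ D := fun h => hdncl h.1
          have hsub : insert d (cl G T' ∩ D) ⊆ cl G T ∩ D := by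
            intro v hv
            rcases hv with rfl | hv
            · exact ⟨hdclT, hd.2⟩
            · exact hmono hv
          have h1 : (insert d (cl G T' ∩ D)).ncard = (cl G T' ∩ D).ncard + 1 :=
            Set.ncard_insert_of_notMem hdni (Set.toFinite _)
          have h2 : (insert d (cl G T' ∩ D)).ncard ≤ (cl G T ∩ D).ncard :=
            Set.ncard_le_ncard hsub (Set.toFinite _)
          omega
      · have hTM : T ⊆ M := by
          intro x hx
          rcases hTQ hx with h | h
          · exact absurd (h ▸ hx) hrT
          · exact h.1
        exact hD T (ind_mono hTM hM)
    obtain ⟨f, hf1, hf2⟩ := hall_bij (hQcard.trans hDb.symm) hhall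
    -- `Pp` holds for the new configuration `Q`
    have hPQ : Pp G Q := by
      intro T hT
      have hub' : ∀ S, Ind G S → S.ncard ≤ M.ncard := fun S hS => (hub S hS).trans_eq hMb.symm
      have hbase : T.ncard ≤ (cl G T ∩ M).ncard := exchange hM hub' hT
      by_cases hrcl : r ∈ cl G T
      · set X : Set V := (cl G T ∩ M) \ {m} with hX
        have hXQ : insert r X ⊆ cl G T ∩ Q := by
          intro x hx
          rcases hx with rfl | hx
          · exact ⟨hrcl, Set.mem_insert _ _⟩
          · exact ⟨hx.1.1, Set.mem_insert_iff.mpr (Or.inr ⟨hx.1.2, hx.2⟩)⟩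
        have hrX : r ∉ X := fun h => hrM h.1.2
        have h1 : (insert r X).ncard = X.ncard + 1 :=
          Set.ncard_insert_of_notMem hrX (Set.toFinite _)
        have h2 : (cl G T ∩ M).ncard ≤ X.ncard + 1 := by
          have hsub2 : cl G T ∩ M ⊆ insert m X := by
            intro x hx
            by_cases hxm : x = m
            · exact Or.inl hxm
            · exact Or.inr ⟨hx, hxm⟩
          calc (cl G T ∩ M).ncard ≤ (insert m X).ncard :=
                Set.ncard_le_ncard hsub2 (Set.toFinite _)
            _ ≤ X.ncard + 1 := Set.ncard_insert_le _ _
        have h3 : (insert r X).ncard ≤ (cl G T ∩ Q).ncard :=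
          Set.ncard_le_ncard hXQ (Set.toFinite _)
        omega
      · by_cases hmcl : m ∈ cl G T
        · -- strict case, using minimality of `|A|`
          have hstrict : T.ncard + 1 ≤ (cl G T ∩ M).ncard := by
            by_contra hc
            push_neg at hc
            have htight : (cl G T ∩ M).ncard = T.ncard := by omega
            obtain ⟨hWind, hWcard⟩ := exchange_set hM hT
            set W : Set V := (M \ cl G T) ∪ T with hW
            have hTb : T.ncard ≤ b := hub T hT
            have hWb : W.ncard = b := by
              rw [hW, hWcard, htight, hMb]
              omega
            have hWA : W ∩ G.neighborSet r ⊆ A \ {m} := by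
              rintro u ⟨huW, hur⟩
              rcases huW with hu | hu
              · refine ⟨⟨hu.1, hur⟩, ?_⟩
                intro h
                rw [Set.mem_singleton_iff] at h
                exact hu.2 (h ▸ hmcl)
              · exfalso
                exact hrcl (Or.inr ⟨u, hu, G.adj_symm hur⟩)
            have hmA : m ∈ A := ⟨hmM, hmadj⟩
            have hAcard : (A \ {m}).ncard = A.ncard - 1 :=
              Set.ncard_diff_singleton_of_mem hmA
            have hApos : 0 < A.ncard := (Set.ncard_pos (Set.toFinite _)).mpr ⟨m, hmA⟩
            have hle : (W ∩ G.neighborSet r).ncard ≤ (A \ {m}).ncard :=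
              Set.ncard_le_ncard hWA (Set.toFinite _)
            have hmem : (W ∩ G.neighborSet r).ncard ∈ 𝒜 := ⟨W, hWind, hWb, rfl⟩
            have hgen := Nat.sInf_le hmem
            omega
          have hsub : (cl G T ∩ M) \ {m} ⊆ cl G T ∩ Q := by
            intro x hx
            exact ⟨hx.1.1, Set.mem_insert_iff.mpr (Or.inr ⟨hx.1.2, hx.2⟩)⟩
          have h1 : ((cl G T ∩ M) \ {m}).ncard = (cl G T ∩ M).ncard - 1 :=
            Set.ncard_diff_singleton_of_mem ⟨hmcl, hmM⟩
          have h2 : ((cl G T ∩ M) \ {m}).ncard ≤ (cl G T ∩ Q).ncard :=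
            Set.ncard_le_ncard hsub (Set.toFinite _)
          omega
        · have hsub : cl G T ∩ M ⊆ cl G T ∩ Q := by
            intro x hx
            have hxm : x ≠ m := fun h => hmcl (h ▸ hx.1)
            exact ⟨hx.1, Set.mem_insert_iff.mpr (Or.inr ⟨hx.2, hxm⟩)⟩
          exact hbase.trans (Set.ncard_le_ncard hsub (Set.toFinite _))
    exact ⟨Q, hQcard, hPQ, Set.mem_insert _ _, f, hf1, hf2⟩

/-- Members of the invariant family are dominating sets. -/
lemma dom_of_pp {D : Set V} (hD : Pp G D) : ED.IsDomSet G D := by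
  intro v hv
  have h1 := hD {v} (Set.pairwise_singleton v _)
  rw [Set.ncard_singleton] at h1
  have hne : (cl G {v} ∩ D).Nonempty := (Set.ncard_pos (Set.toFinite _)).mp (by omega)
  obtain ⟨u, hucl, huD⟩ := hne
  rcases hucl with hu | ⟨t, ht, hadj⟩
  · rw [Set.mem_singleton_iff] at hu
    exact absurd (hu ▸ huD) hv
  · rw [Set.mem_singleton_iff] at ht
    subst ht
    exact ⟨u, huD, G.adj_symm hadj⟩

end EDAux

open ED in
/-- For any graph `G`, `γ_m^∞(G) ≤ β(G)`. -/
theorem stmt_16 {V : Type} [Fintype V] (G : SimpleGraph V) :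
    mEternalDomNum G ≤ indepNum G := by
    classical
  set b : ℕ := indepNum G with hb
  have hbdd : BddAbove {n | ∃ S : Set V, S.Pairwise (fun u v => ¬ G.Adj u v) ∧ S.ncard = n} := by
    refine ⟨Fintype.card V, ?_⟩
    rintro n ⟨S, _, rfl⟩
    calc S.ncard ≤ (Set.univ : Set V).ncard :=
          Set.ncard_le_ncard (Set.subset_univ S) (Set.toFinite _)
      _ = Fintype.card V := by rw [Set.ncard_univ, Nat.card_eq_fintype_card]
  have hub : ∀ S, EDAux.Ind G S → S.ncard ≤ b := by
    intro S hS
    exact le_csSup hbdd ⟨S, hS, rfl⟩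
  have hex : ∃ M, EDAux.Ind G M ∧ M.ncard = b := by
    have hne : {n | ∃ S : Set V, S.Pairwise (fun u v => ¬ G.Adj u v) ∧ S.ncard = n}.Nonempty :=
      ⟨0, ∅, Set.pairwise_empty _, Set.ncard_empty V⟩
    have := Nat.sSup_mem hne hbdd
    obtain ⟨M, hM, hMb⟩ := this
    exact ⟨M, hM, hMb⟩
  have hcan : CanDefendAllMove G b := by
    refine ⟨{D | D.ncard = b ∧ EDAux.Pp G D}, ?_, ?_, ?_⟩
    · obtain ⟨M, hM, hMb⟩ := hex
      exact ⟨M, hMb, EDAux.pp_of_max hub hM hMb⟩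
    · rintro D ⟨hDb, hD⟩
      exact ⟨EDAux.dom_of_pp hD, hDb⟩
    · rintro D ⟨hDb, hD⟩ r hrD
      obtain ⟨D', hD'b, hD'P, hrD', f, hf1, hf2⟩ := EDAux.closure hub hex hD hDb hrD
      exact ⟨D', ⟨hD'b, hD'P⟩, hrD', f, hf1, hf2⟩
  exact Nat.sInf_le hcan
end

section
/- Every tree with at least two vertices that is not a star has at least two exposed stems. -/
open scoped Classical

set_option linter.unusedSectionVars false

namespace StemAux
open SimpleGraph

variable {V : Type} {T : SimpleGraph V}

lemma getVert_mem_support {u v : V} (p : T.Walk u v) (i : ℕ) :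
    p.getVert i ∈ p.support := by
  induction p generalizing i with
  | nil => cases i <;> simp [Walk.getVert]
  | cons h q ih =>
    cases i with
    | zero => simp [Walk.getVert]
    | succ n => simp only [Walk.getVert_cons_succ, Walk.support_cons, List.mem_cons]
                exact Or.inr (ih n)

lemma getVert_injective {u v : V} (p : T.Walk u v) (hp : p.IsPath) :
    ∀ i j, i ≤ p.length → j ≤ p.length → p.getVert i = p.getVert j → i = j := by
  induction p with
  | nil => intro i j hi hj _; simp at hi hj; omega
  | cons h q ih =>
    rw [Walk.cons_isPath_iff] at hp
    intro i j hi hj hij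
    match i, j with
    | 0, 0 => rfl
    | 0, j+1 =>
      exfalso
      rw [Walk.getVert_zero, Walk.getVert_cons_succ] at hij
      rw [hij] at hp
      exact hp.2 (getVert_mem_support q j)
    | i+1, 0 =>
      exfalso
      rw [Walk.getVert_zero, Walk.getVert_cons_succ] at hij
      rw [← hij] at hp
      exact hp.2 (getVert_mem_support q i)
    | i+1, j+1 =>
      simp only [Walk.getVert_cons_succ] at hij
      simp only [Walk.length_cons] at hi hj
      have := ih hp.1 i j (by omega) (by omega) hij
      omega

lemma path_eq_edge {u v : V} (hT : T.IsTree) (h : T.Adj u v) (p : T.Walk u v)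
    (hp : p.IsPath) : p = Walk.cons h Walk.nil := by
  have h2 : (Walk.cons h Walk.nil : T.Walk u v).IsPath := by
    simp [Walk.cons_isPath_iff, h.ne]
  exact (hT.existsUnique_path u v).unique hp h2

lemma adj_of_length_one {u v : V} (q : T.Walk u v) (h : q.length = 1) : T.Adj u v := by
  have := q.adj_getVert_succ (i := 0) (by omega)
  rwa [Walk.getVert_zero, show (0 + 1 : ℕ) = q.length by omega, Walk.getVert_length] at this

lemma second_vertex {u v w : V} (hT : T.IsTree) (p : T.Walk u v) (hp : p.IsPath)
    (hw : w ∈ p.support) (h : T.Adj u w) : p.getVert 1 = w := by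
  have ht := path_eq_edge hT h _ (hp.takeUntil hw)
  have hspec := p.take_spec hw
  conv_lhs => rw [← hspec]
  rw [Walk.getVert_append, ht]
  simp

lemma no_triangle {c u v : V} (hT : T.IsTree) (h1 : T.Adj c u) (h2 : T.Adj c v)
    (h3 : T.Adj u v) : False := by
  have hq1 : (Walk.cons h3 Walk.nil : T.Walk u v).IsPath := by
    simp [Walk.cons_isPath_iff, h3.ne]
  have hq2 : (Walk.cons h1.symm (Walk.cons h2 Walk.nil) : T.Walk u v).IsPath := by
    simp [Walk.cons_isPath_iff, h1.ne', h2.ne, h3.ne]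
  have := (hT.existsUnique_path u v).unique hq1 hq2
  have := congrArg Walk.length this
  simp at this


variable {V : Type} [Fintype V] {T : SimpleGraph V}

lemma leaf_endpoint {a b : V} (hT : T.IsTree) (p : T.Walk a b) (hp : p.IsPath)
    (hmax : ∀ {x y : V} (q : T.Walk x y), q.IsPath → q.length ≤ p.length)
    (hL : 1 ≤ p.length) : T.neighborSet a = {p.getVert 1} := by
  ext w
  simp only [mem_neighborSet, Set.mem_singleton_iff]
  constructor
  · intro hw
    by_cases hws : w ∈ p.support
    · exact (second_vertex hT p hp hws hw).symm
    · exfalso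
      have hq : (Walk.cons hw.symm p).IsPath := by
        rw [Walk.cons_isPath_iff]; exact ⟨hp, hws⟩
      have := hmax _ hq
      simp [Walk.length_cons] at this
  · intro hw
    subst hw
    have := p.adj_getVert_succ (i := 0) (by omega)
    rwa [Walk.getVert_zero] at this

lemma isLeaf_endpoint {a b : V} (hT : T.IsTree) (p : T.Walk a b) (hp : p.IsPath)
    (hmax : ∀ {x y : V} (q : T.Walk x y), q.IsPath → q.length ≤ p.length)
    (hL : 1 ≤ p.length) : ED.IsLeaf T a := by
  rw [ED.IsLeaf, leaf_endpoint hT p hp hmax hL, Set.ncard_singleton]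

lemma exposed_of_max {a b : V} (hT : T.IsTree) (p : T.Walk a b) (hp : p.IsPath)
    (hmax : ∀ {x y : V} (q : T.Walk x y), q.IsPath → q.length ≤ p.length)
    (hL : 2 ≤ p.length) : ED.IsExposedStem T (p.getVert 1) := by
  set s := p.getVert 1 with hs_def
  have hadj01 : T.Adj a s := by
    have := p.adj_getVert_succ (i := 0) (by omega)
    rwa [Walk.getVert_zero] at this
  have hadj12 : T.Adj s (p.getVert 2) := p.adj_getVert_succ (i := 1) (by omega)
  have hne02 : a ≠ p.getVert 2 := by
    intro h
    have : (0 : ℕ) = 2 := by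
      apply getVert_injective p hp 0 2 (by omega) (by omega)
      rwa [Walk.getVert_zero]
    omega
  have hleaf : ED.IsLeaf T a := isLeaf_endpoint hT p hp hmax (by omega)
  -- setup: decompose p at s
  have hsmem : s ∈ p.support := getVert_mem_support p 1
  have ht : p.takeUntil s hsmem = Walk.cons hadj01 Walk.nil :=
    path_eq_edge hT hadj01 _ (hp.takeUntil hsmem)
  set p1 := p.dropUntil s hsmem with hp1_def
  have hp1path : p1.IsPath := hp.dropUntil hsmem
  have hlen1 : p1.length + 1 = p.length := by
    have := congrArg Walk.length (p.take_spec hsmem)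
    rw [Walk.length_append, ht] at this
    simpa [add_comm] using this
  have hgv2 : p.getVert 2 = p1.getVert 1 := by
    conv_lhs => rw [← p.take_spec hsmem]
    rw [Walk.getVert_append, ht]
    simp
    rfl
  have hsupp : p.support = a :: s :: p1.support.tail := by
    have := congrArg Walk.support (p.take_spec hsmem)
    rw [Walk.support_append, ht] at this
    simpa using this.symm
  -- non-leaf neighbors of s are contained in {p.getVert 2}
  have hsub : {v | T.Adj s v ∧ ¬ ED.IsLeaf T v} ⊆ {p.getVert 2} := by
    intro w hw
    obtain ⟨hadj, hnl⟩ := hw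
    simp only [Set.mem_singleton_iff]
    by_contra hwne
    have hwa : w ≠ a := fun h => hnl (h ▸ hleaf)
    have hws' : w ≠ s := fun h => T.irrefl (h ▸ hadj)
    by_cases hws : w ∈ p.support
    · -- w is on p, so w = p.getVert 2 via uniqueness
      have hwp1 : w ∈ p1.support := by
        rw [hsupp] at hws
        simp only [List.mem_cons] at hws
        rcases hws with h | h | h
        · exact absurd h hwa
        · exact absurd h hws'
        · exact List.mem_of_mem_tail h
      have := second_vertex hT p1 hp1path hwp1 hadj
      rw [← hgv2] at this
      exact hwne this.symm
    · -- w off p; w is not a leaf, so it has another neighbor, extend path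
      have hwp1 : w ∉ p1.support := fun h => hws (p.support_dropUntil_subset hsmem h)
      have hP' : (Walk.cons hadj.symm p1).IsPath := by
        rw [Walk.cons_isPath_iff]; exact ⟨hp1path, hwp1⟩
      have hP'len : (Walk.cons hadj.symm p1).length = p.length := by
        simp [Walk.length_cons, hlen1]
      -- w has a neighbor x ≠ s
      have hsw : s ∈ T.neighborSet w := hadj.symm
      have hcard : 1 < (T.neighborSet w).ncard := by
        have hpos : 0 < (T.neighborSet w).ncard :=
          (Set.ncard_pos (Set.toFinite _)).mpr ⟨s, hsw⟩
        have : (T.neighborSet w).ncard ≠ 1 := hnl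
        omega
      obtain ⟨x, hx, hxs⟩ := Set.exists_ne_of_one_lt_ncard hcard s
      have hxadj : T.Adj w x := hx
      have hxnot : x ∉ (Walk.cons hadj.symm p1).support := by
        intro hmem
        have := second_vertex hT _ hP' hmem hxadj
        rw [Walk.getVert_cons_succ, Walk.getVert_zero] at this
        exact hxs this.symm
      have hQ : (Walk.cons hxadj.symm (Walk.cons hadj.symm p1)).IsPath := by
        rw [Walk.cons_isPath_iff]; exact ⟨hP', hxnot⟩
      have := hmax _ hQ
      simp only [Walk.length_cons, hlen1] at this
      omega
  constructor
  · -- IsStem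
    refine ⟨?_, a, hadj01.symm, hleaf⟩
    rw [show (2 : ℕ) ≤ _ ↔ 1 < (T.neighborSet s).ncard from Iff.rfl,
      Set.one_lt_ncard (Set.toFinite _)]
    exact ⟨a, hadj01.symm, p.getVert 2, hadj12, hne02⟩
  · calc {v | T.Adj s v ∧ ¬ ED.IsLeaf T v}.ncard ≤ ({p.getVert 2} : Set V).ncard :=
        Set.ncard_le_ncard hsub (Set.toFinite _)
      _ = 1 := Set.ncard_singleton _

end StemAux


open SimpleGraph StemAux

open ED in
/-- Every tree with at least two vertices that is not a star has at least two
exposed stems. -/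
theorem stmt_17 {V : Type} [Fintype V] (T : SimpleGraph V) (hT : T.IsTree)
    (hn : 2 ≤ Fintype.card V) (hstar : ¬ IsStarGraph T) :
    2 ≤ {s : V | IsExposedStem T s}.ncard := by
  classical
  have hnonempty : Nonempty V := Fintype.card_pos_iff.mp (by omega)
  obtain ⟨v0⟩ := hnonempty
  set S : Set ℕ := {n | ∃ (x : V) (y : V) (q : T.Walk x y), q.IsPath ∧ q.length = n}
    with hS_def
  have hSne : S.Nonempty := ⟨0, v0, v0, Walk.nil, Walk.IsPath.nil, rfl⟩
  have hSbdd : BddAbove S := by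
    refine ⟨Fintype.card V, fun n hn' => ?_⟩
    obtain ⟨x, y, q, hq, hql⟩ := hn'
    exact hql ▸ hq.length_lt.le
  obtain ⟨a, b, p, hp, hpl⟩ := Nat.sSup_mem hSne hSbdd
  have hmax : ∀ {x y : V} (q : T.Walk x y), q.IsPath → q.length ≤ p.length := by
    intro x y q hq
    rw [hpl]
    exact le_csSup hSbdd ⟨x, y, q, hq, rfl⟩
  -- there is an edge, so p has length at least 1
  have hL1 : 1 ≤ p.length := by
    obtain ⟨x, y, hxy⟩ := Fintype.exists_pair_of_one_lt_card (by omega : 1 < Fintype.card V)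
    obtain ⟨q, hq, -⟩ := hT.existsUnique_path x y
    have hq0 : q.length ≠ 0 := by
      intro h0
      apply hxy
      have h := q.getVert_length
      rw [h0, q.getVert_zero] at h
      exact h
    have := hmax q hq
    omega
  -- if p has length at most 2, T is a star
  have hL3 : 3 ≤ p.length := by
    by_contra hlt
    push_neg at hlt
    apply hstar
    have hcases : p.length = 1 ∨ p.length = 2 := by omega
    have hcent : ∃ c : V, ∀ v, v ≠ c → T.Adj c v := by
      rcases hcases with h1 | h2
      · refine ⟨a, fun v hv => ?_⟩
        obtain ⟨q, hq, -⟩ := hT.existsUnique_path a v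
        have hq0 : q.length ≠ 0 := by
          intro h0
          apply hv
          have h := q.getVert_length
          rw [h0, q.getVert_zero] at h
          exact h.symm
        have hq2 : q.length ≤ 1 := h1 ▸ hmax q hq
        exact adj_of_length_one q (by omega)
      · set c := p.getVert 1 with hcdef
        have hadj01 : T.Adj a c := by
          have := p.adj_getVert_succ (i := 0) (by omega)
          rwa [Walk.getVert_zero] at this
        have hadj1b : T.Adj c b := by
          have := p.adj_getVert_succ (i := 1) (by omega)
          rwa [show (1 + 1 : ℕ) = p.length by omega, Walk.getVert_length] at this
        have hab : a ≠ b := by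
          intro h
          have h0 := p.getVert_zero
          have hl := p.getVert_length
          have : (0 : ℕ) = p.length :=
            getVert_injective p hp 0 p.length (by omega) le_rfl (by rw [h0, hl, h])
          omega
        refine ⟨c, fun v hv => ?_⟩
        obtain ⟨q, hq, -⟩ := hT.existsUnique_path c v
        have hq0 : q.length ≠ 0 := by
          intro h0
          apply hv
          have h := q.getVert_length
          rw [h0, q.getVert_zero] at h
          exact h.symm
        have hq2 : q.length ≤ 2 := h2 ▸ hmax q hq
        rcases (by omega : q.length = 1 ∨ q.length = 2) with hql | hql
        · exact adj_of_length_one q hql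
        · exfalso
          have hamem : a ∈ q.support := by
            by_contra hna
            have hQ : (Walk.cons hadj01 q).IsPath := (Walk.cons_isPath_iff _ _).mpr ⟨hq, hna⟩
            have := hmax _ hQ
            rw [Walk.length_cons, hql] at this
            omega
          have hbmem : b ∈ q.support := by
            by_contra hnb
            have hQ : (Walk.cons hadj1b.symm q).IsPath := (Walk.cons_isPath_iff _ _).mpr ⟨hq, hnb⟩
            have := hmax _ hQ
            rw [Walk.length_cons, hql] at this
            omega
          have h1a := second_vertex hT q hq hamem hadj01.symm
          have h1b := second_vertex hT q hq hbmem hadj1b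
          exact hab (h1a ▸ h1b ▸ rfl)
    obtain ⟨c, hc⟩ := hcent
    refine ⟨c, hc, fun u v huv => ?_⟩
    by_contra hcon
    push_neg at hcon
    exact no_triangle hT (hc u hcon.1) (hc v hcon.2) huv
  -- two exposed stems
  have hs1 : IsExposedStem T (p.getVert 1) := exposed_of_max hT p hp hmax (by omega)
  have hrevmax : ∀ {x y : V} (q : T.Walk x y), q.IsPath → q.length ≤ p.reverse.length := by
    intro x y q hq
    rw [Walk.length_reverse]
    exact hmax q hq
  have hs2 : IsExposedStem T (p.reverse.getVert 1) :=
    exposed_of_max hT p.reverse hp.reverse hrevmax (by rw [Walk.length_reverse]; omega)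
  have hne : p.getVert 1 ≠ p.reverse.getVert 1 := by
    rw [Walk.getVert_reverse]
    intro h
    have := getVert_injective p hp 1 (p.length - 1) (by omega) (by omega) h
    omega
  rw [show (2 : ℕ) ≤ _ ↔ 1 < {s : V | IsExposedStem T s}.ncard from Iff.rfl,
    Set.one_lt_ncard (Set.toFinite _)]
  exact ⟨p.getVert 1, hs1, p.reverse.getVert 1, hs2, hne⟩
end
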